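/- With the definitions and assumptions in the context, suppose ε ≥ (1/2)·T_s·l_φ·l_s and h : ℝ^n → ℝ satisfies h(x) < h̄_*(x) for all x ∈ ℝ^n. Then {x ∈ ℝ^n : h(x) ≥ ε} ⊆ underbar-S_* ⊆ S_*, where underbar-S_* = {x ∈ ℝ^n : h̄_*(x) ≥ (1/2)·T_s·l_φ·l_s}. In particular, the set Γ on which the optimization-based control is active is contained in S_*. -/

import Mathlib

open Set

/-- Under the semiflow `φ` on `ℝ^n` with safe set `S_s = {h_s ≥ 0}`, backup
safe set `S_b = {h_b ≥ 0}` with `S_b ⊆ S_s` forward invariant under `φ`,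
`S_* = {x : h_*(x) ≥ 0}` where `h_*(x) = min{h_b(φ(x,T)), inf_{τ∈[0,T]} h_s(φ(x,τ))}`
(so `x ∈ S_*` iff `h_b(φ(x,T)) ≥ 0` and `h_s(φ(x,τ)) ≥ 0` for all `τ ∈ [0,T]`),
`T_s = T/N`, `h̄_*` the sampled barrier function, `h_s` Lipschitz with constant `l_s > 0`,
and `τ ↦ φ(x,τ)` Lipschitz on `[0,T]` with constant `l_φ > 0`: if
`ε ≥ (1/2)·T_s·l_φ·l_s` and `h(x) < h̄_*(x)` for all `x`, then
`{x : h(x) ≥ ε} ⊆ underbar-S_* ⊆ S_*`, where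
`underbar-S_* = {x : h̄_*(x) ≥ (1/2)·T_s·l_φ·l_s}`. -/
theorem h_superlevel_subset_ubarSstar_subset_Sstar
    (n : ℕ) (hn : 0 < n)
    (φ : EuclideanSpace ℝ (Fin n) → ℝ → EuclideanSpace ℝ (Fin n))
    (hφ0 : ∀ x, φ x 0 = x)
    (hφadd : ∀ (x : EuclideanSpace ℝ (Fin n)) (s t : ℝ), 0 ≤ s → 0 ≤ t →
      φ x (s + t) = φ (φ x s) t)
    (hs hb : EuclideanSpace ℝ (Fin n) → ℝ)
    (Ss Sb Sstar : Set (EuclideanSpace ℝ (Fin n)))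
    (hSs : Ss = {x | 0 ≤ hs x})
    (hSb : Sb = {x | 0 ≤ hb x})
    (hsub : Sb ⊆ Ss)
    (hinv : ∀ x ∈ Sb, ∀ t : ℝ, 0 ≤ t → φ x t ∈ Sb)
    (T : ℝ) (hT : 0 < T)
    (hSstar : Sstar = {x | 0 ≤ hb (φ x T) ∧ ∀ τ ∈ Icc (0:ℝ) T, 0 ≤ hs (φ x τ)})
    (N : ℕ) (hN : 0 < N) (Ts : ℝ) (hTs : Ts = T / N)
    (hbarStar : EuclideanSpace ℝ (Fin n) → ℝ)
    (hhbarStar : ∀ x, hbarStar x =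
      min (hb (φ x ((N : ℝ) * Ts)))
        ((Finset.range (N + 1)).inf' Finset.nonempty_range_add_one
          (fun i => hs (φ x ((i : ℝ) * Ts)))))
    (ls lφ : ℝ) (hls : 0 < ls) (hlφ : 0 < lφ)
    (hlip_s : ∀ x y : EuclideanSpace ℝ (Fin n), |hs x - hs y| ≤ ls * ‖x - y‖)
    (hlip_φ : ∀ x : EuclideanSpace ℝ (Fin n), ∀ τ₁ ∈ Icc (0:ℝ) T, ∀ τ₂ ∈ Icc (0:ℝ) T,
      ‖φ x τ₁ - φ x τ₂‖ ≤ lφ * |τ₁ - τ₂|)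
    (ε : ℝ) (hε : (1 / 2) * Ts * lφ * ls ≤ ε)
    (h : EuclideanSpace ℝ (Fin n) → ℝ)
    (hlt : ∀ x, h x < hbarStar x)
    (ubarSstar : Set (EuclideanSpace ℝ (Fin n)))
    (hubarSstar : ubarSstar = {x | (1 / 2) * Ts * lφ * ls ≤ hbarStar x}) :
    {x | ε ≤ h x} ⊆ ubarSstar ∧ ubarSstar ⊆ Sstar := by

  have hTs0 : 0 < Ts := by
    rw [hTs]; positivity
  have hNT : (N : ℝ) * Ts = T := by
    have hN' : (N : ℝ) ≠ 0 := Nat.cast_ne_zero.mpr hN.ne'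
    rw [hTs]; field_simp
  have hc0 : 0 ≤ (1 / 2) * Ts * lφ * ls := by positivity
  constructor
  · intro x hx
    rw [hubarSstar]
    exact le_of_lt (lt_of_le_of_lt (le_trans hε hx) (hlt x))
  · intro x hx
    rw [hubarSstar] at hx
    simp only [mem_setOf_eq] at hx
    rw [hhbarStar x] at hx
    have hx1 : (1 / 2) * Ts * lφ * ls ≤ hb (φ x ((N : ℝ) * Ts)) :=
      le_trans hx (min_le_left _ _)
    have hx2 : ∀ i ∈ Finset.range (N + 1),
        (1 / 2) * Ts * lφ * ls ≤ hs (φ x ((i : ℝ) * Ts)) := by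
      intro i hi
      exact le_trans (le_trans hx (min_le_right _ _)) (Finset.inf'_le _ hi)
    rw [hSstar]
    constructor
    · rw [← hNT]; exact le_trans hc0 hx1
    · intro τ hτ
      obtain ⟨hτ0, hτT⟩ := hτ
      set k : ℤ := round (τ / Ts) with hk
      have hr0 : 0 ≤ τ / Ts := div_nonneg hτ0 hTs0.le
      have hrN : τ / Ts ≤ (N : ℝ) := by
        rw [div_le_iff₀ hTs0]
        rw [← hNT] at hτT; linarith
      have habs : |τ / Ts - (k : ℝ)| ≤ 1 / 2 := abs_sub_round _
      have habs' := abs_le.mp habs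
      have hk0 : 0 ≤ k := by
        have h1 : (-1 : ℝ) < (k : ℝ) := by linarith [habs'.2]
        have : (-1 : ℤ) < k := by exact_mod_cast h1
        omega
      have hkN : k ≤ (N : ℤ) := by
        have h1 : (k : ℝ) < (N : ℝ) + 1 := by linarith [habs'.1]
        have : k < (N : ℤ) + 1 := by exact_mod_cast h1
        omega
      have habs2 : |τ - (k : ℝ) * Ts| ≤ Ts / 2 := by
        have : τ - (k : ℝ) * Ts = (τ / Ts - (k : ℝ)) * Ts := by
          field_simp
        rw [this, abs_mul, abs_of_pos hTs0]
        calc |τ / Ts - (k : ℝ)| * Ts ≤ (1/2) * Ts :=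
              mul_le_mul_of_nonneg_right habs hTs0.le
          _ = Ts / 2 := by ring
      set i : ℕ := k.toNat with hi
      have hki : (i : ℝ) = (k : ℝ) := by
        rw [hi]; exact_mod_cast congrArg Int.cast (Int.toNat_of_nonneg hk0)
      have hiN : i ∈ Finset.range (N + 1) := by
        rw [Finset.mem_range]
        omega
      have hiT : (i : ℝ) * Ts ∈ Icc (0:ℝ) T := by
        constructor
        · positivity
        · rw [← hNT]
          apply mul_le_mul_of_nonneg_right _ hTs0.le
          exact_mod_cast Finset.mem_range_succ_iff.mp hiN
      have hlip := hlip_φ x τ ⟨hτ0, hτT⟩ ((i : ℝ) * Ts) hiT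
      have hd : ‖φ x τ - φ x ((i : ℝ) * Ts)‖ ≤ lφ * (Ts / 2) := by
        refine le_trans hlip (mul_le_mul_of_nonneg_left ?_ hlφ.le)
        rw [hki]; exact habs2
      have hss := hlip_s (φ x ((i : ℝ) * Ts)) (φ x τ)
      have hnorm : ‖φ x ((i : ℝ) * Ts) - φ x τ‖ = ‖φ x τ - φ x ((i : ℝ) * Ts)‖ :=
        norm_sub_rev _ _
      have : hs (φ x ((i : ℝ) * Ts)) - hs (φ x τ) ≤ ls * (lφ * (Ts / 2)) := by
        calc hs (φ x ((i : ℝ) * Ts)) - hs (φ x τ)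
            ≤ |hs (φ x ((i : ℝ) * Ts)) - hs (φ x τ)| := le_abs_self _
          _ ≤ ls * ‖φ x ((i : ℝ) * Ts) - φ x τ‖ := hss
          _ = ls * ‖φ x τ - φ x ((i : ℝ) * Ts)‖ := by rw [hnorm]
          _ ≤ ls * (lφ * (Ts / 2)) := mul_le_mul_of_nonneg_left hd hls.le
      have hxi := hx2 i hiN
      nlinarith [this, hxi]
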